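/- For a finite connected network, the effective resistance between u and v equals the infimum over finite families of self-avoiding paths P₁,…,Pₙ from u to v and per-path resistances r_{e,P_k} > 0 with ∑_{k : e ∈ P_k} 1/r_{e,P_k} ≤ 1/r_e for each edge e, of (∑_k (∑_{e ∈ P_k} r_{e,P_k})^{-1})^{-1}. -/

import Mathlib

open Finset

/-- A unit flow from `u` to `v` on the graph `G`. -/
def IsUnitFlow {V : Type*} [Fintype V] (G : SimpleGraph V) (u v : V)
    (θ : V → V → ℝ) : Prop :=
  (∀ x y, θ x y = -θ y x) ∧
  (∀ x y, ¬ G.Adj x y → θ x y = 0) ∧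
  (∀ x, x ≠ u → x ≠ v → ∑ y, θ x y = 0) ∧
  ∑ y, θ u y = 1

/-- Dirichlet energy of a flow with respect to edge resistances `r`. -/
noncomputable def flowEnergy {V : Type*} [Fintype V] (r : Sym2 V → ℝ)
    (θ : V → V → ℝ) : ℝ :=
  (1 / 2) * ∑ x, ∑ y, (θ x y) ^ 2 * r s(x, y)

/-- The effective resistance between `u` and `v`: the minimal Dirichlet energy
over unit flows from `u` to `v`. -/
noncomputable def effRes {V : Type*} [Fintype V] (G : SimpleGraph V)
    (r : Sym2 V → ℝ) (u v : V) : ℝ :=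
  sInf (flowEnergy r '' {θ | IsUnitFlow G u v θ})

/-- The set of values `(∑ₖ (∑_{e ∈ Pₖ} r_{e,Pₖ})⁻¹)⁻¹` over (nonempty) finite
families of self-avoiding paths `P₁, …, Pₙ` from `u` to `v` and per-path edge
resistances `r_{e,Pₖ} > 0` with `∑_{k : e ∈ Pₖ} 1/r_{e,Pₖ} ≤ 1/r_e` for each
edge `e`. -/
noncomputable def parallelValues {V : Type*} [Fintype V] [DecidableEq V]
    (G : SimpleGraph V) (r : Sym2 V → ℝ) (u v : V) : Set ℝ :=
  {x | ∃ (n : ℕ) (_ : 0 < n) (P : Fin n → G.Walk u v) (ρ : Fin n → Sym2 V → ℝ),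
    (∀ k, (P k).IsPath) ∧
    (∀ k e, 0 < ρ k e) ∧
    (∀ e ∈ G.edgeSet, (∑ k, if e ∈ (P k).edges then (ρ k e)⁻¹ else 0) ≤ (r e)⁻¹) ∧
    x = (∑ k, (∑ e ∈ (P k).edges.toFinset, ρ k e)⁻¹)⁻¹}


set_option linter.unusedSectionVars false
set_option maxHeartbeats 1000000

namespace ParallelAux

variable {V : Type*} [Fintype V] [DecidableEq V] {G : SimpleGraph V}

/-- Signed indicator flow of a walk. -/
def chi {a b : V} (p : G.Walk a b) (x y : V) : ℝ :=
  ((p.darts.countP fun d => d.toProd = (x, y)) : ℝ) -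
  ((p.darts.countP fun d => d.toProd = (y, x)) : ℝ)

lemma chi_antisymm {a b : V} (p : G.Walk a b) (x y : V) : chi p x y = - chi p y x := by
  unfold chi; ring

lemma countP_eq_zero_of_not_adj {a b : V} (p : G.Walk a b) {x y : V} (h : ¬ G.Adj x y) :
    p.darts.countP (fun d => d.toProd = (x, y)) = 0 := by
  rw [List.countP_eq_zero]
  intro d hd hdp
  simp only [decide_eq_true_eq] at hdp
  have := d.adj
  rw [hdp] at this
  exact h this

lemma chi_eq_zero_of_not_adj {a b : V} (p : G.Walk a b) {x y : V} (h : ¬ G.Adj x y) :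
    chi p x y = 0 := by
  unfold chi
  rw [countP_eq_zero_of_not_adj p h, countP_eq_zero_of_not_adj p (fun h' => h h'.symm)]
  simp

lemma sum_chi {a b : V} (p : G.Walk a b) (x : V) :
    ∑ y, chi p x y = (if x = a then (1:ℝ) else 0) - (if x = b then 1 else 0) := by
  induction p with
  | nil => simp [chi]
  | @cons c d b h q ih =>
    have expand : ∀ y, chi (SimpleGraph.Walk.cons h q) x y =
        chi q x y + ((if x = c ∧ y = d then (1:ℝ) else 0) - (if y = c ∧ x = d then 1 else 0)) := by
      intro y
      unfold chi
      rw [SimpleGraph.Walk.darts_cons, List.countP_cons, List.countP_cons]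
      have h1 : ((⟨(c, d), h⟩ : G.Dart).toProd = (x, y)) ↔ (x = c ∧ y = d) := by
        show ((c, d) = (x, y)) ↔ _
        rw [Prod.mk.injEq]
        constructor <;> rintro ⟨u1, u2⟩ <;> exact ⟨u1.symm, u2.symm⟩
      have h2 : ((⟨(c, d), h⟩ : G.Dart).toProd = (y, x)) ↔ (y = c ∧ x = d) := by
        show ((c, d) = (y, x)) ↔ _
        rw [Prod.mk.injEq]
        constructor <;> rintro ⟨u1, u2⟩ <;> exact ⟨u1.symm, u2.symm⟩
      simp only [decide_eq_true_eq]
      rw [if_congr h1 rfl rfl, if_congr h2 rfl rfl]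
      push_cast
      split <;> split <;> ring
    rw [Finset.sum_congr rfl (fun y _ => expand y)]
    rw [Finset.sum_add_distrib, ih, Finset.sum_sub_distrib]
    have e1 : ∑ y, (if x = c ∧ y = d then (1:ℝ) else 0) = if x = c then 1 else 0 := by
      by_cases hx : x = c <;> simp [hx]
    have e2 : ∑ y, (if y = c ∧ x = d then (1:ℝ) else 0) = if x = d then 1 else 0 := by
      by_cases hx : x = d <;> simp [hx]
    rw [e1, e2]
    ring

lemma countP_pair_add_eq_count {a b : V} (p : G.Walk a b) (x y : V) :
    p.darts.countP (fun d => d.toProd = (x, y)) + p.darts.countP (fun d => d.toProd = (y, x))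
      = p.edges.count s(x, y) := by
  have hcount : p.edges.count s(x, y) = p.darts.countP (fun d => d.edge = s(x, y)) := by
    rw [SimpleGraph.Walk.edges, List.count, List.countP_map]
    congr 1
  rw [hcount]
  induction p.darts with
  | nil => simp
  | cons d l ih =>
    simp only [List.countP_cons, decide_eq_true_eq]
    have hiff : (d.edge = s(x, y)) ↔ (d.toProd = (x, y) ∨ d.toProd = (y, x)) := by
      simpa using SimpleGraph.dart_edge_eq_mk'_iff (d := d) (u := x) (v := y)
    by_cases h1 : d.toProd = (x, y)
    · have h2 : ¬ d.toProd = (y, x) := by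
        intro h2
        have hxy : x = y := by
          rw [h1] at h2
          exact (Prod.ext_iff.1 h2).1
        have := d.adj
        rw [h1] at this
        exact G.irrefl (hxy ▸ this)
      rw [if_pos h1, if_neg h2, if_pos (hiff.2 (Or.inl h1))]
      omega
    · by_cases h2 : d.toProd = (y, x)
      · rw [if_neg h1, if_pos h2, if_pos (hiff.2 (Or.inr h2))]
        omega
      · rw [if_neg h1, if_neg h2, if_neg (fun h => (hiff.1 h).elim h1 h2)]
        omega

lemma count_edges_path {a b : V} {p : G.Walk a b} (hp : p.IsPath) (e : Sym2 V) :
    p.edges.count e = if e ∈ p.edges then 1 else 0 := by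
  split
  · exact List.count_eq_one_of_mem hp.isTrail.edges_nodup ‹_›
  · exact List.count_eq_zero.2 ‹_›

/-- For a path, `|chi|` is at most the indicator of edge membership. -/
lemma abs_chi_le {a b : V} {p : G.Walk a b} (hp : p.IsPath) (x y : V) :
    |chi p x y| ≤ if s(x, y) ∈ p.edges then 1 else 0 := by
  have h := countP_pair_add_eq_count p x y
  have hc := count_edges_path hp s(x, y)
  unfold chi
  set A := p.darts.countP (fun d => d.toProd = (x, y)) with hA
  set B := p.darts.countP (fun d => d.toProd = (y, x)) with hB
  by_cases hm : s(x, y) ∈ p.edges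
  · rw [if_pos hm]
    rw [if_pos hm] at hc
    rw [hc] at h
    have : (A = 1 ∧ B = 0) ∨ (A = 0 ∧ B = 1) := by omega
    rcases this with ⟨hA1, hB1⟩ | ⟨hA1, hB1⟩ <;> rw [hA1, hB1] <;> norm_num
  · rw [if_neg hm]
    rw [if_neg hm] at hc
    rw [hc] at h
    have hA1 : A = 0 := by omega
    have hB1 : B = 0 := by omega
    rw [hA1, hB1]
    norm_num

lemma chi_eq_one_of_dart {a b : V} {p : G.Walk a b} (hp : p.IsPath) {x y : V}
    (hd : (x, y) ∈ p.darts.map (fun d => d.toProd)) : chi p x y = 1 := by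
  have h := countP_pair_add_eq_count p x y
  have hApos : 0 < p.darts.countP (fun d => d.toProd = (x, y)) := by
    rw [List.countP_pos_iff]
    obtain ⟨d, hd1, hd2⟩ := List.mem_map.1 hd
    exact ⟨d, hd1, by simp [hd2]⟩
  have hmem : s(x, y) ∈ p.edges := by
    obtain ⟨d, hd1, hd2⟩ := List.mem_map.1 hd
    have : d.edge = s(x, y) := by rw [SimpleGraph.dart_edge_eq_mk'_iff]; exact Or.inl hd2
    rw [← this, SimpleGraph.Walk.edges]
    exact List.mem_map_of_mem hd1
  have hc := count_edges_path hp s(x, y)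
  rw [if_pos hmem] at hc
  rw [hc] at h
  unfold chi
  set A := p.darts.countP (fun d => d.toProd = (x, y))
  set B := p.darts.countP (fun d => d.toProd = (y, x))
  have : A = 1 ∧ B = 0 := by omega
  rw [this.1, this.2]
  norm_num

lemma sum_sum_ite_eq_two_mul (E : Finset (Sym2 V)) (hE : ∀ e ∈ E, ¬ e.IsDiag) (F : Sym2 V → ℝ) :
    ∑ x, ∑ y, (if s(x, y) ∈ E then F s(x, y) else 0) = 2 * ∑ e ∈ E, F e := by
  classical
  have h1 : ∑ x, ∑ y, (if s(x, y) ∈ E then F s(x, y) else 0)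
      = ∑ p ∈ (univ ×ˢ univ).filter (fun p : V × V => s(p.1, p.2) ∈ E),
          F s(p.1, p.2) := by
    rw [Finset.sum_filter, ← Finset.sum_product']
  have hmaps : ∀ p ∈ (univ ×ˢ univ).filter (fun p : V × V => s(p.1, p.2) ∈ E),
      s(p.1, p.2) ∈ E := fun p hp => (Finset.mem_filter.1 hp).2
  rw [h1, ← Finset.sum_fiberwise_of_maps_to hmaps (fun p : V × V => F s(p.1, p.2))]
  rw [Finset.mul_sum]
  refine Finset.sum_congr rfl ?_
  intro e he
  induction e using Sym2.ind with
  | _ a b =>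
    have hab : a ≠ b := fun h => hE _ he (by simp [h])
    have hfib : ((univ ×ˢ univ).filter (fun p : V × V => s(p.1, p.2) ∈ E)).filter
        (fun p : V × V => s(p.1, p.2) = s(a, b)) = {(a, b), (b, a)} := by
      ext p
      simp only [Finset.mem_filter, Finset.mem_product, Finset.mem_univ, true_and,
        Finset.mem_insert, Finset.mem_singleton, Sym2.eq, Sym2.rel_iff', Prod.ext_iff,
        Prod.swap_prod_mk]
      constructor
      · rintro ⟨-, h | h⟩
        · exact Or.inl ⟨h.1, h.2⟩
        · exact Or.inr ⟨h.1, h.2⟩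
      · rintro (⟨h1, h2⟩ | ⟨h1, h2⟩)
        · subst h1; subst h2; exact ⟨he, Or.inl ⟨rfl, rfl⟩⟩
        · subst h1; subst h2; exact ⟨by rwa [Sym2.eq_swap], Or.inr ⟨rfl, rfl⟩⟩
    have hsum : ∀ p ∈ ((univ ×ˢ univ).filter (fun p : V × V => s(p.1, p.2) ∈ E)).filter
        (fun p : V × V => s(p.1, p.2) = s(a, b)), F s(p.1, p.2) = F s(a, b) := by
      intro p hp
      rw [(Finset.mem_filter.1 hp).2]
    rw [Finset.sum_congr rfl hsum, Finset.sum_const, hfib]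
    have hcard : ({(a, b), (b, a)} : Finset (V × V)).card = 2 := by
      rw [Finset.card_pair]
      simp [Prod.ext_iff]
      intro h; exact fun _ => hab h
    rw [hcard]
    push_cast
    ring

lemma exists_pos_path {u v : V} (η : V → V → ℝ)
    (hskew : ∀ x y, η x y = - η y x)
    (hsupp : ∀ x y, ¬ G.Adj x y → η x y = 0)
    (hcons : ∀ x, x ≠ u → x ≠ v → ∑ y, η x y = 0)
    (hs : 0 < ∑ y, η u y) :
    ∃ p : G.Walk u v, p.IsPath ∧ ∀ d ∈ p.darts, 0 < η d.toProd.1 d.toProd.2 := by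
  classical
  set step : V → V → Prop := fun x y => 0 < η x y with hstep
  have hreach : Relation.ReflTransGen step u v := by
    by_contra hnv
    set T : Finset V := univ.filter (fun y => Relation.ReflTransGen step u y) with hT
    have huT : u ∈ T := by
      simp only [hT, Finset.mem_filter, Finset.mem_univ, true_and]
      exact Relation.ReflTransGen.refl
    have hvT : v ∉ T := by simp [hT]; exact hnv
    have key : ∑ x ∈ T, ∑ y, η x y = ∑ y, η u y := by
      refine Finset.sum_eq_single_of_mem u huT ?_
      intro x hx hxu
      refine hcons x hxu (fun h => hvT (h ▸ hx))
    have hTT : ∑ x ∈ T, ∑ y ∈ T, η x y = 0 := by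
      have hsymm : ∑ x ∈ T, ∑ y ∈ T, η x y = - ∑ x ∈ T, ∑ y ∈ T, η x y := by
        calc (∑ x ∈ T, ∑ y ∈ T, η x y) = ∑ x ∈ T, ∑ y ∈ T, η y x := Finset.sum_comm
        _ = ∑ x ∈ T, ∑ y ∈ T, -η x y :=
            Finset.sum_congr rfl fun x _ => Finset.sum_congr rfl fun y _ => hskew y x
        _ = - ∑ x ∈ T, ∑ y ∈ T, η x y := by simp
      linarith
    have hTC : ∑ x ∈ T, ∑ y ∈ Tᶜ, η x y ≤ 0 := by
      refine Finset.sum_nonpos (fun x hx => Finset.sum_nonpos (fun y hy => ?_))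
      by_contra hpos
      push_neg at hpos
      have hyT : y ∈ T := by
        simp only [hT, Finset.mem_filter, Finset.mem_univ, true_and] at hx ⊢
        exact hx.tail hpos
      exact (Finset.mem_compl.1 hy) hyT
    have hsplit : ∑ x ∈ T, ∑ y, η x y
        = ∑ x ∈ T, ∑ y ∈ T, η x y + ∑ x ∈ T, ∑ y ∈ Tᶜ, η x y := by
      rw [← Finset.sum_add_distrib]
      exact Finset.sum_congr rfl (fun x _ => (Finset.sum_add_sum_compl T _).symm)
    rw [key] at hsplit
    linarith
  obtain ⟨q, hq⟩ : ∃ q : G.Walk u v, ∀ d ∈ q.darts, 0 < η d.toProd.1 d.toProd.2 := by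
    refine Relation.ReflTransGen.head_induction_on hreach ⟨SimpleGraph.Walk.nil, by simp⟩ ?_
    rintro a c hac hcb ⟨q, hq⟩
    have hac' : 0 < η a c := hac
    have hadj : G.Adj a c := by
      by_contra h
      rw [hsupp a c h] at hac'
      exact lt_irrefl 0 hac'
    refine ⟨SimpleGraph.Walk.cons hadj q, ?_⟩
    intro d hd
    rw [SimpleGraph.Walk.darts_cons, List.mem_cons] at hd
    rcases hd with rfl | hd
    · exact hac'
    · exact hq d hd
  exact ⟨q.bypass, q.bypass_isPath, fun d hd => hq d (q.darts_bypass_subset hd)⟩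

lemma dart_of_chi_ne_zero {a b : V} {p : G.Walk a b} {x y : V} (h : chi p x y ≠ 0) :
    (x, y) ∈ p.darts.map (fun d => d.toProd) ∨ (y, x) ∈ p.darts.map (fun d => d.toProd) := by
  by_contra hc
  push_neg at hc
  apply h
  unfold chi
  have h1 : p.darts.countP (fun d => d.toProd = (x, y)) = 0 := by
    rw [List.countP_eq_zero]; intro d hd hdp; simp only [decide_eq_true_eq] at hdp
    exact hc.1 (List.mem_map.2 ⟨d, hd, hdp⟩)
  have h2 : p.darts.countP (fun d => d.toProd = (y, x)) = 0 := by
    rw [List.countP_eq_zero]; intro d hd hdp; simp only [decide_eq_true_eq] at hdp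
    exact hc.2 (List.mem_map.2 ⟨d, hd, hdp⟩)
  rw [h1, h2]; simp

open scoped Classical in
lemma flow_decomp {u v : V} (huv : u ≠ v) :
    ∀ (N : ℕ) (η : V → V → ℝ),
      ((univ ×ˢ univ).filter (fun xy : V × V => η xy.1 xy.2 ≠ 0)).card ≤ N →
      (∀ x y, η x y = - η y x) →
      (∀ x y, ¬ G.Adj x y → η x y = 0) →
      (∀ x, x ≠ u → x ≠ v → ∑ y, η x y = 0) →
      0 ≤ ∑ y, η u y →
      ∃ (n : ℕ) (w : Fin n → ℝ) (P : Fin n → G.Walk u v),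
        (∀ k, 0 < w k) ∧ (∀ k, (P k).IsPath) ∧
        (∑ k, w k) = ∑ y, η u y ∧
        (∀ x y, (∑ k, if (x, y) ∈ (P k).darts.map (fun d => d.toProd) then w k else 0)
          ≤ max (η x y) 0) := by
  intro N
  induction N with
  | zero =>
    intro η hcard hskew hsupp hcons hs0
    have hzero : ∀ x y, η x y = 0 := by
      intro x y
      by_contra h
      have : (x, y) ∈ (univ ×ˢ univ).filter (fun xy : V × V => η xy.1 xy.2 ≠ 0) := by
        simp [h]
      have := Finset.card_pos.2 ⟨_, this⟩
      omega
    refine ⟨0, Fin.elim0, Fin.elim0, (fun k => k.elim0), (fun k => k.elim0), ?_, ?_⟩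
    · simp [hzero]
    · intro x y
      simp [hzero x y]
  | succ N ih =>
    intro η hcard hskew hsupp hcons hs0
    rcases eq_or_lt_of_le hs0 with hseq | hspos
    · refine ⟨0, Fin.elim0, Fin.elim0, (fun k => k.elim0), (fun k => k.elim0), ?_, ?_⟩
      · simp [← hseq]
      · intro x y
        simp [le_max_right]
    · obtain ⟨p, hp, hpd⟩ := exists_pos_path η hskew hsupp hcons hspos
      have hdne : p.darts ≠ [] := by
        intro h
        have : p.length = 0 := by
          have := p.length_darts
          rw [h] at this
          simpa using this.symm
        exact huv (SimpleGraph.Walk.eq_of_length_eq_zero this)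
      have hDne : (p.darts.toFinset.image (fun d => η d.toProd.1 d.toProd.2)).Nonempty := by
        refine Finset.Nonempty.image ?_ _
        rwa [List.toFinset_nonempty_iff]
      set m : ℝ := (p.darts.toFinset.image (fun d => η d.toProd.1 d.toProd.2)).min' hDne with hm
      have hmmem := Finset.min'_mem _ hDne
      rw [Finset.mem_image] at hmmem
      obtain ⟨d₀, hd₀mem, hd₀⟩ := hmmem
      rw [List.mem_toFinset] at hd₀mem
      have hmle : ∀ d ∈ p.darts, m ≤ η d.toProd.1 d.toProd.2 := by
        intro d hd
        exact Finset.min'_le _ _ (Finset.mem_image_of_mem _ (List.mem_toFinset.2 hd))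
      have hmpos : 0 < m := by
        rw [hm, ← hd₀]
        exact hpd d₀ hd₀mem
      by_cases hsm : ∑ y, η u y ≤ m
      · -- single path with full weight
        refine ⟨1, (fun _ => ∑ y, η u y), (fun _ => p), (fun _ => hspos), (fun _ => hp), by simp, ?_⟩
        intro x y
        rw [Fin.sum_univ_one]
        split
        · next hmem =>
          obtain ⟨d, hd, hdp⟩ := List.mem_map.1 hmem
          have h1 : m ≤ η x y := by
            have := hmle d hd
            rwa [hdp] at this
          have := le_trans hsm h1
          exact le_trans this (le_max_left _ _)
        · exact le_max_right _ _
      · push_neg at hsm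
        set η' : V → V → ℝ := fun x y => η x y - m * chi p x y with hη'
        have hchi_zero : ∀ x y, η x y = 0 → chi p x y = 0 := by
          intro x y hxy
          by_contra hc
          rcases dart_of_chi_ne_zero hc with hd | hd
          · obtain ⟨d, hdm, hdp⟩ := List.mem_map.1 hd
            have := hpd d hdm
            rw [hdp] at this
            simp only at this
            rw [hxy] at this
            exact lt_irrefl 0 this
          · obtain ⟨d, hdm, hdp⟩ := List.mem_map.1 hd
            have := hpd d hdm
            rw [hdp] at this
            simp only at this
            rw [hskew y x, hxy] at this
            simp at this
        have hskew' : ∀ x y, η' x y = - η' y x := by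
          intro x y
          simp only [hη']
          rw [hskew x y, chi_antisymm p x y]
          ring
        have hsupp' : ∀ x y, ¬ G.Adj x y → η' x y = 0 := by
          intro x y h
          simp only [hη']
          rw [hsupp x y h, chi_eq_zero_of_not_adj p h]
          ring
        have hsumchi : ∀ x, ∑ y, η' x y
            = (∑ y, η x y) - m * ((if x = u then (1:ℝ) else 0) - (if x = v then 1 else 0)) := by
          intro x
          simp only [hη']
          rw [Finset.sum_sub_distrib, ← Finset.mul_sum, sum_chi p x]
        have hcons' : ∀ x, x ≠ u → x ≠ v → ∑ y, η' x y = 0 := by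
          intro x hxu hxv
          rw [hsumchi x, hcons x hxu hxv, if_neg hxu, if_neg hxv]
          ring
        have hstr' : ∑ y, η' u y = (∑ y, η u y) - m := by
          rw [hsumchi u, if_pos rfl, if_neg huv]
          ring
        have hs0' : 0 ≤ ∑ y, η' u y := by
          rw [hstr']
          linarith
        -- support decreases
        have hchi_d₀ : chi p d₀.toProd.1 d₀.toProd.2 = 1 := by
          refine chi_eq_one_of_dart hp ?_
          exact List.mem_map.2 ⟨d₀, hd₀mem, rfl⟩
        have hcard' : ((univ ×ˢ univ).filter (fun xy : V × V => η' xy.1 xy.2 ≠ 0)).card ≤ N := by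
          have hsub : (univ ×ˢ univ).filter (fun xy : V × V => η' xy.1 xy.2 ≠ 0)
              ⊆ ((univ ×ˢ univ).filter (fun xy : V × V => η xy.1 xy.2 ≠ 0)).erase
                  (d₀.toProd.1, d₀.toProd.2) := by
            intro xy hxy
            rw [Finset.mem_filter] at hxy
            rw [Finset.mem_erase, Finset.mem_filter]
            refine ⟨?_, hxy.1, ?_⟩
            · intro hh
              apply hxy.2
              have h1 : xy.1 = d₀.toProd.1 := by rw [hh]
              have h2 : xy.2 = d₀.toProd.2 := by rw [hh]
              simp only [hη', h1, h2, hchi_d₀, hd₀]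
              ring
            · intro hh
              apply hxy.2
              simp only [hη', hh, hchi_zero _ _ hh]
              ring
          have hmem : (d₀.toProd.1, d₀.toProd.2)
              ∈ (univ ×ˢ univ).filter (fun xy : V × V => η xy.1 xy.2 ≠ 0) := by
            simp only [Finset.mem_filter, Finset.mem_product, Finset.mem_univ, true_and]
            have := hpd d₀ hd₀mem
            exact ne_of_gt this
          have := Finset.card_le_card hsub
          rw [Finset.card_erase_of_mem hmem] at this
          omega
        obtain ⟨n, w, P, hw, hP, hsum, hbd⟩ := ih η' hcard' hskew' hsupp' hcons' hs0'
        refine ⟨n + 1, Fin.cons m w, Fin.cons p P, ?_, ?_, ?_, ?_⟩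
        · intro k
          refine Fin.cases ?_ ?_ k
          · simpa using hmpos
          · intro i; simpa using hw i
        · intro k
          refine Fin.cases ?_ ?_ k
          · simpa using hp
          · intro i; simpa using hP i
        · rw [Fin.sum_univ_succ]
          simp only [Fin.cons_zero, Fin.cons_succ]
          rw [hsum, hstr']
          ring
        · intro x y
          rw [Fin.sum_univ_succ]
          simp only [Fin.cons_zero, Fin.cons_succ]
          have hrec := hbd x y
          by_cases hmem : (x, y) ∈ p.darts.map (fun d => d.toProd)
          · rw [if_pos hmem]
            obtain ⟨d, hd, hdp⟩ := List.mem_map.1 hmem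
            have hηxy : m ≤ η x y := by
              have := hmle d hd
              rwa [hdp] at this
            have hchi1 : chi p x y = 1 := chi_eq_one_of_dart hp hmem
            have hη'xy : η' x y = η x y - m := by
              simp only [hη', hchi1]; ring
            have hmax' : max (η' x y) 0 = η x y - m := by
              rw [hη'xy]
              exact max_eq_left (by linarith)
            rw [hmax'] at hrec
            have : max (η x y) 0 = η x y := max_eq_left (by linarith)
            rw [this]
            linarith
          · rw [if_neg hmem]
            have hle : max (η' x y) 0 ≤ max (η x y) 0 := by
              by_cases hmem2 : (y, x) ∈ p.darts.map (fun d => d.toProd)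
              · obtain ⟨d, hd, hdp⟩ := List.mem_map.1 hmem2
                have hηyx : m ≤ η y x := by
                  have := hmle d hd
                  rwa [hdp] at this
                have hchi1 : chi p y x = 1 := chi_eq_one_of_dart hp hmem2
                have hchixy : chi p x y = -1 := by
                  rw [chi_antisymm p x y, hchi1]
                have hηxy : η x y ≤ -m := by
                  rw [hskew x y]
                  linarith
                have hη'xy : η' x y = η x y + m := by
                  simp only [hη', hchixy]; ring
                have h1 : max (η' x y) 0 = 0 := max_eq_right (by rw [hη'xy]; linarith)
                have h2 : max (η x y) 0 = 0 := max_eq_right (by linarith)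
                rw [h1, h2]
              · have hchi0 : chi p x y = 0 := by
                  by_contra hc
                  rcases dart_of_chi_ne_zero hc with h | h
                  · exact hmem h
                  · exact hmem2 h
                have : η' x y = η x y := by simp only [hη', hchi0]; ring
                rw [this]
            linarith
  
lemma edge_mem_of_chi_ne_zero {a b : V} {p : G.Walk a b} {x y : V} (h : chi p x y ≠ 0) :
    s(x, y) ∈ p.edges := by
  rcases dart_of_chi_ne_zero h with hd | hd <;>
    obtain ⟨d, hdm, hdp⟩ := List.mem_map.1 hd
  · have : d.edge = s(x, y) := by rw [SimpleGraph.dart_edge_eq_mk'_iff]; exact Or.inl hdp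
    rw [← this, SimpleGraph.Walk.edges]
    exact List.mem_map_of_mem hdm
  · have : d.edge = s(y, x) := by rw [SimpleGraph.dart_edge_eq_mk'_iff]; exact Or.inl hdp
    rw [Sym2.eq_swap, ← this, SimpleGraph.Walk.edges]
    exact List.mem_map_of_mem hdm

lemma exists_flow_le_value {u v : V} (huv : u ≠ v) (r : Sym2 V → ℝ)
    (hr : ∀ e ∈ G.edgeSet, 0 < r e) {x : ℝ}
    (hx : x ∈ parallelValues G r u v) :
    ∃ θ : V → V → ℝ, IsUnitFlow G u v θ ∧ flowEnergy r θ ≤ x := by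
  obtain ⟨n, hn, P, ρ, hP, hρ, hcon, hxval⟩ := hx
  set R : Fin n → ℝ := fun k => ∑ e ∈ (P k).edges.toFinset, ρ k e with hRdef
  have hne : ∀ k, (P k).edges.toFinset.Nonempty := by
    intro k
    rw [List.toFinset_nonempty_iff]
    intro h
    have : (P k).length = 0 := by
      have h2 := (P k).length_edges; rw [h] at h2; simpa using h2.symm
    exact huv (SimpleGraph.Walk.eq_of_length_eq_zero this)
  have hR : ∀ k, 0 < R k := fun k => Finset.sum_pos (fun e _ => hρ k e) (hne k)
  haveI : Nonempty (Fin n) := ⟨⟨0, hn⟩⟩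
  set C : ℝ := ∑ k, (R k)⁻¹ with hCdef
  have hC : 0 < C := Finset.sum_pos (fun k _ => inv_pos.2 (hR k)) univ_nonempty
  set α : Fin n → ℝ := fun k => (R k)⁻¹ / C with hαdef
  have hα : ∀ k, 0 < α k := fun k => div_pos (inv_pos.2 (hR k)) hC
  have hαsum : ∑ k, α k = 1 := by
    simp only [hαdef]
    rw [← Finset.sum_div, ← hCdef, div_self hC.ne']
  set θ : V → V → ℝ := fun x y => ∑ k, α k * chi (P k) x y with hθdef
  have hkey : ∀ z, ∑ y, θ z y = (if z = u then (1:ℝ) else 0) - (if z = v then 1 else 0) := by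
    intro z
    calc ∑ y, θ z y = ∑ k, ∑ y, α k * chi (P k) z y := Finset.sum_comm
    _ = ∑ k, α k * ((if z = u then (1:ℝ) else 0) - (if z = v then 1 else 0)) := by
        refine Finset.sum_congr rfl (fun k _ => ?_)
        rw [← Finset.mul_sum, sum_chi (P k) z]
    _ = _ := by rw [← Finset.sum_mul, hαsum, one_mul]
  have hUF : IsUnitFlow G u v θ := by
    refine ⟨?_, ?_, ?_, ?_⟩
    · intro x y
      simp only [hθdef]
      rw [← Finset.sum_neg_distrib]
      refine Finset.sum_congr rfl (fun k _ => ?_)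
      rw [chi_antisymm (P k) x y]
      ring
    · intro x y h
      simp only [hθdef]
      refine Finset.sum_eq_zero (fun k _ => ?_)
      rw [chi_eq_zero_of_not_adj (P k) h, mul_zero]
    · intro z hzu hzv
      rw [hkey z, if_neg hzu, if_neg hzv]
      ring
    · rw [hkey u, if_pos rfl, if_neg huv]
      ring
  set E : Finset (Sym2 V) := univ.biUnion (fun k : Fin n => (P k).edges.toFinset) with hEdef
  have hEdge : ∀ e ∈ E, e ∈ G.edgeSet := by
    intro e he
    rw [hEdef, Finset.mem_biUnion] at he
    obtain ⟨k, -, hk⟩ := he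
    exact (P k).edges_subset_edgeSet (List.mem_toFinset.1 hk)
  have hEd : ∀ e ∈ E, ¬ e.IsDiag := fun e he => G.not_isDiag_of_mem_edgeSet (hEdge e he)
  set D : Sym2 V → ℝ := fun e => ∑ k, if e ∈ (P k).edges then (α k)^2 * ρ k e else 0 with hDdef
  have pointwise : ∀ x y, θ x y ^ 2 * r s(x, y) ≤ (if s(x, y) ∈ E then D s(x, y) else 0) := by
    intro x y
    by_cases hxyE : s(x, y) ∈ E
    · rw [if_pos hxyE]
      have hre : 0 < r s(x, y) := hr _ (hEdge _ hxyE)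
      set s' := univ.filter (fun k => s(x, y) ∈ (P k).edges) with hs'
      have hB : |θ x y| ≤ ∑ k ∈ s', α k := by
        calc |θ x y| ≤ ∑ k, |α k * chi (P k) x y| := Finset.abs_sum_le_sum_abs _ _
        _ ≤ ∑ k, (if s(x, y) ∈ (P k).edges then α k else 0) := by
            refine Finset.sum_le_sum (fun k _ => ?_)
            rw [abs_mul, abs_of_pos (hα k)]
            calc α k * |chi (P k) x y| ≤ α k * (if s(x, y) ∈ (P k).edges then 1 else 0) :=
              mul_le_mul_of_nonneg_left (abs_chi_le (hP k) x y) (hα k).le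
            _ = _ := by split <;> simp
        _ = ∑ k ∈ s', α k := (Finset.sum_filter _ _).symm
      by_cases hs'ne : s'.Nonempty
      · have hg : ∀ k ∈ s', 0 < (α k)^2 * ρ k s(x, y) :=
          fun k _ => mul_pos (pow_pos (hα k) 2) (hρ k _)
        have hsed := Finset.sq_sum_div_le_sum_sq_div s' α hg
        have hrhs : ∑ k ∈ s', (α k)^2 / ((α k)^2 * ρ k s(x, y)) ≤ (r s(x, y))⁻¹ := by
          have hterm : ∀ k ∈ s', (α k)^2 / ((α k)^2 * ρ k s(x, y)) = (ρ k s(x, y))⁻¹ := by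
            intro k _
            rw [div_mul_eq_div_div, div_self (pow_ne_zero 2 (hα k).ne'), one_div]
          rw [Finset.sum_congr rfl hterm]
          have h2 := hcon s(x, y) (hEdge _ hxyE)
          calc ∑ k ∈ s', (ρ k s(x, y))⁻¹
              = ∑ k, if s(x, y) ∈ (P k).edges then (ρ k s(x, y))⁻¹ else 0 :=
            Finset.sum_filter _ _
          _ ≤ _ := h2
        set Dg := ∑ k ∈ s', (α k)^2 * ρ k s(x, y) with hDg
        have hDgpos : 0 < Dg := Finset.sum_pos hg hs'ne
        have h1 : (∑ k ∈ s', α k)^2 / Dg ≤ (r s(x, y))⁻¹ := le_trans hsed hrhs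
        have h2 : (∑ k ∈ s', α k)^2 ≤ (r s(x, y))⁻¹ * Dg := by
          rwa [div_le_iff₀ hDgpos] at h1
        have h3 : θ x y ^ 2 ≤ (∑ k ∈ s', α k)^2 := by
          rw [← sq_abs (θ x y)]
          exact pow_le_pow_left₀ (abs_nonneg _) hB 2
        have hDeq : D s(x, y) = Dg := (Finset.sum_filter _ _).symm
        rw [hDeq]
        calc θ x y ^ 2 * r s(x, y) ≤ ((r s(x, y))⁻¹ * Dg) * r s(x, y) :=
          mul_le_mul_of_nonneg_right (h3.trans h2) hre.le
        _ = Dg := by field_simp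
      · rw [Finset.not_nonempty_iff_eq_empty] at hs'ne
        have hB0 : |θ x y| ≤ 0 := by rw [hs'ne] at hB; simpa using hB
        have hθ0 : θ x y = 0 := abs_nonpos_iff.1 hB0
        rw [hθ0]
        have : (0:ℝ) ≤ D s(x, y) := by
          refine Finset.sum_nonneg (fun k _ => ?_)
          split
          · exact (mul_pos (pow_pos (hα k) 2) (hρ k _)).le
          · exact le_refl 0
        simpa using this
    · rw [if_neg hxyE]
      have hθ0 : θ x y = 0 := by
        refine Finset.sum_eq_zero (fun k _ => ?_)
        have : chi (P k) x y = 0 := by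
          by_contra hc
          exact hxyE (Finset.mem_biUnion.2
            ⟨k, Finset.mem_univ k, List.mem_toFinset.2 (edge_mem_of_chi_ne_zero hc)⟩)
        rw [this, mul_zero]
      rw [hθ0]
      norm_num
  have hfinal : ∑ e ∈ E, D e = C⁻¹ := by
    have h1 : ∑ e ∈ E, D e = ∑ k, ∑ e ∈ E, (if e ∈ (P k).edges then (α k)^2 * ρ k e else 0) :=
      Finset.sum_comm
    have h2 : ∀ k : Fin n, ∑ e ∈ E, (if e ∈ (P k).edges then (α k)^2 * ρ k e else 0)
        = (α k)^2 * R k := by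
      intro k
      have e1 : ∀ e, (if e ∈ (P k).edges then (α k)^2 * ρ k e else 0)
          = (if e ∈ (P k).edges.toFinset then (α k)^2 * ρ k e else 0) := by
        intro e
        simp [List.mem_toFinset]
      rw [Finset.sum_congr rfl (fun e _ => e1 e), Finset.sum_ite_mem]
      have : E ∩ (P k).edges.toFinset = (P k).edges.toFinset := by
        rw [Finset.inter_eq_right]
        exact Finset.subset_biUnion_of_mem (fun k : Fin n => (P k).edges.toFinset)
          (Finset.mem_univ k)
      rw [this, ← Finset.mul_sum]
    rw [h1, Finset.sum_congr rfl (fun k _ => h2 k)]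
    have h3 : ∀ k : Fin n, (α k)^2 * R k = (R k)⁻¹ / C^2 := by
      intro k
      simp only [hαdef]
      rw [div_pow, div_mul_eq_mul_div, sq ((R k)⁻¹), mul_assoc,
        inv_mul_cancel₀ (hR k).ne', mul_one]
    rw [Finset.sum_congr rfl (fun k _ => h3 k), ← Finset.sum_div, ← hCdef, sq,
      div_mul_eq_div_div, div_self hC.ne', one_div]
  refine ⟨θ, hUF, ?_⟩
  have hbound : flowEnergy r θ ≤ (1/2) * (2 * ∑ e ∈ E, D e) := by
    rw [flowEnergy, ← sum_sum_ite_eq_two_mul E hEd D]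
    have := Finset.sum_le_sum (fun x _ =>
      Finset.sum_le_sum (fun y _ => pointwise x y) (s := (univ : Finset V)))
      (s := (univ : Finset V))
    linarith
  rw [hxval]
  have : (1:ℝ)/2 * (2 * ∑ e ∈ E, D e) = C⁻¹ := by rw [hfinal]; ring
  rw [this] at hbound
  exact hbound

lemma dart_or_dart_of_edge_mem {a b : V} {p : G.Walk a b} {x y : V}
    (h : s(x, y) ∈ p.edges) :
    (x, y) ∈ p.darts.map (fun d => d.toProd) ∨ (y, x) ∈ p.darts.map (fun d => d.toProd) := by
  have hc := countP_pair_add_eq_count p x y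
  have hpos : 0 < p.edges.count s(x, y) := List.count_pos_iff.2 h
  rcases Nat.lt_or_ge 0 (p.darts.countP (fun d => d.toProd = (x, y))) with h1 | h1
  · left
    obtain ⟨d, hd, hdp⟩ := List.countP_pos_iff.1 h1
    simp only [decide_eq_true_eq] at hdp
    exact List.mem_map.2 ⟨d, hd, hdp⟩
  · right
    have h2 : 0 < p.darts.countP (fun d => d.toProd = (y, x)) := by omega
    obtain ⟨d, hd, hdp⟩ := List.countP_pos_iff.1 h2
    simp only [decide_eq_true_eq] at hdp
    exact List.mem_map.2 ⟨d, hd, hdp⟩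

open scoped Classical in
lemma exists_value_le_energy {u v : V} (huv : u ≠ v) (r : Sym2 V → ℝ)
    (hr : ∀ e ∈ G.edgeSet, 0 < r e) {θ : V → V → ℝ} (hθ : IsUnitFlow G u v θ) :
    ∃ x ∈ parallelValues G r u v, x ≤ flowEnergy r θ := by
  obtain ⟨hskew, hsupp, hcons, hstr⟩ := hθ
  -- the symmetrized absolute value of the flow
  set F : Sym2 V → ℝ := Sym2.lift ⟨fun x y => |θ x y|,
    fun x y => by show |θ x y| = |θ y x|; rw [hskew x y, abs_neg]⟩ with hFdef
  have hF : ∀ x y, F s(x, y) = |θ x y| := fun x y => Sym2.lift_mk _ x y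
  obtain ⟨n, w, P, hw, hP, hsum, hbd⟩ := flow_decomp (G := G) huv
    ((univ ×ˢ univ).filter (fun xy : V × V => θ xy.1 xy.2 ≠ 0)).card θ le_rfl
    hskew hsupp hcons (by rw [hstr]; norm_num)
  rw [hstr] at hsum
  have hn : 0 < n := by
    rcases Nat.eq_zero_or_pos n with h | h
    · subst h
      simp at hsum
    · exact h
  -- edge-usage bound
  have hW : ∀ x y, (∑ k, if s(x, y) ∈ (P k).edges then w k else 0) ≤ F s(x, y) := by
    intro x y
    have hsplit : ∀ k, (if s(x, y) ∈ (P k).edges then w k else 0)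
        ≤ (if (x, y) ∈ (P k).darts.map (fun d => d.toProd) then w k else 0)
          + (if (y, x) ∈ (P k).darts.map (fun d => d.toProd) then w k else 0) := by
      intro k
      by_cases hm : s(x, y) ∈ (P k).edges
      · rw [if_pos hm]
        rcases dart_or_dart_of_edge_mem hm with hd | hd
        · rw [if_pos hd]
          have : (0:ℝ) ≤ if (y, x) ∈ (P k).darts.map (fun d => d.toProd) then w k else 0 := by
            split
            · exact (hw k).le
            · exact le_refl 0
          linarith
        · rw [if_pos hd]
          have : (0:ℝ) ≤ if (x, y) ∈ (P k).darts.map (fun d => d.toProd) then w k else 0 := by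
            split
            · exact (hw k).le
            · exact le_refl 0
          linarith
      · rw [if_neg hm]
        have hA : (0:ℝ) ≤ if (x, y) ∈ (P k).darts.map (fun d => d.toProd) then w k else 0 := by
          split; exacts [(hw k).le, le_rfl]
        have hB : (0:ℝ) ≤ if (y, x) ∈ (P k).darts.map (fun d => d.toProd) then w k else 0 := by
          split; exacts [(hw k).le, le_rfl]
        linarith
    calc (∑ k, if s(x, y) ∈ (P k).edges then w k else 0)
        ≤ (∑ k, if (x, y) ∈ (P k).darts.map (fun d => d.toProd) then w k else 0)
          + (∑ k, if (y, x) ∈ (P k).darts.map (fun d => d.toProd) then w k else 0) := by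
          rw [← Finset.sum_add_distrib]
          exact Finset.sum_le_sum (fun k _ => hsplit k)
    _ ≤ max (θ x y) 0 + max (θ y x) 0 := add_le_add (hbd x y) (hbd y x)
    _ = F s(x, y) := by
        rw [hF x y, hskew y x]
        exact max_zero_add_max_neg_zero_eq_abs_self (θ x y)
  -- positivity of F on used edges
  have hFpos : ∀ (k : Fin n) (e : Sym2 V), e ∈ (P k).edges → 0 < F e := by
    intro k e
    induction e using Sym2.ind with
    | _ x y =>
      intro he
      have h1 : w k ≤ ∑ j, if s(x, y) ∈ (P j).edges then w j else 0 := by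
        have h0 : (if s(x, y) ∈ (P k).edges then w k else 0) = w k := if_pos he
        calc w k = if s(x, y) ∈ (P k).edges then w k else 0 := h0.symm
        _ ≤ ∑ j, if s(x, y) ∈ (P j).edges then w j else 0 :=
          Finset.single_le_sum (f := fun j : Fin n => if s(x, y) ∈ (P j).edges then w j else 0)
            (fun j _ => by split; exacts [(hw j).le, le_rfl]) (Finset.mem_univ k)
      have := lt_of_lt_of_le (hw k) (le_trans h1 (hW x y))
      exact this
  -- used edges are genuine edges
  have hmemES : ∀ (k : Fin n) (e : Sym2 V), e ∈ (P k).edges → e ∈ G.edgeSet :=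
    fun k e he => (P k).edges_subset_edgeSet he
  -- define per-path resistances
  set ρ : Fin n → Sym2 V → ℝ := fun k e => if e ∈ (P k).edges then r e * F e / w k else 1
    with hρdef
  have hρpos : ∀ k e, 0 < ρ k e := by
    intro k e
    simp only [hρdef]
    split
    · next hm => exact div_pos (mul_pos (hr e (hmemES k e hm)) (hFpos k e hm)) (hw k)
    · norm_num
  -- the constraint
  have hcon : ∀ e ∈ G.edgeSet, (∑ k, if e ∈ (P k).edges then (ρ k e)⁻¹ else 0) ≤ (r e)⁻¹ := by
    intro e he
    by_cases huse : ∃ k, e ∈ (P k).edges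
    · obtain ⟨k₀, hk₀⟩ := huse
      have hFe : 0 < F e := hFpos k₀ e hk₀
      have hre : 0 < r e := hr e he
      have h1 : ∀ k : Fin n, (if e ∈ (P k).edges then (ρ k e)⁻¹ else 0)
          = (if e ∈ (P k).edges then w k else 0) / (r e * F e) := by
        intro k
        by_cases hm : e ∈ (P k).edges
        · rw [if_pos hm, if_pos hm]
          simp only [hρdef, if_pos hm]
          rw [inv_div]
        · rw [if_neg hm, if_neg hm, zero_div]
      rw [Finset.sum_congr rfl (fun k _ => h1 k), ← Finset.sum_div]
      have h2 : (∑ k, if e ∈ (P k).edges then w k else 0) ≤ F e := by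
        induction e using Sym2.ind with
        | _ x y => exact hW x y
      calc (∑ k, if e ∈ (P k).edges then w k else 0) / (r e * F e)
          ≤ F e / (r e * F e) := by gcongr
      _ = (r e)⁻¹ := by field_simp
    · push_neg at huse
      have : ∀ k : Fin n, (if e ∈ (P k).edges then (ρ k e)⁻¹ else 0) = 0 :=
        fun k => if_neg (huse k)
      rw [Finset.sum_congr rfl (fun k _ => this k)]
      simp [inv_nonneg, (hr e he).le]
  -- nonnegativity of F
  have hFnn : ∀ e, 0 ≤ F e := by
    intro e
    induction e using Sym2.ind with
    | _ x y => rw [hF x y]; exact abs_nonneg _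
  have hWe : ∀ e, (∑ k, if e ∈ (P k).edges then w k else 0) ≤ F e := by
    intro e
    induction e using Sym2.ind with
    | _ x y => exact hW x y
  -- per-path resistance sums
  set Q : Fin n → ℝ := fun k => ∑ e ∈ (P k).edges.toFinset, r e * F e with hQdef
  have hne : ∀ k, (P k).edges.toFinset.Nonempty := by
    intro k
    rw [List.toFinset_nonempty_iff]
    intro h
    have h2 := (P k).length_edges
    rw [h] at h2
    exact huv (SimpleGraph.Walk.eq_of_length_eq_zero (by simpa using h2.symm))
  have hQpos : ∀ k, 0 < Q k := fun k => Finset.sum_pos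
    (fun e he => mul_pos (hr e (hmemES k e (List.mem_toFinset.1 he)))
      (hFpos k e (List.mem_toFinset.1 he))) (hne k)
  have hSinv : ∀ k, (∑ e ∈ (P k).edges.toFinset, ρ k e)⁻¹ = w k / Q k := by
    intro k
    have hS : ∑ e ∈ (P k).edges.toFinset, ρ k e = Q k / w k := by
      rw [hQdef]
      simp only
      rw [Finset.sum_div]
      refine Finset.sum_congr rfl (fun e he => ?_)
      simp only [hρdef]
      rw [if_pos (List.mem_toFinset.1 he)]
    rw [hS, inv_div]
  refine ⟨(∑ k, (∑ e ∈ (P k).edges.toFinset, ρ k e)⁻¹)⁻¹,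
    ⟨n, hn, P, ρ, hP, hρpos, hcon, rfl⟩, ?_⟩
  have hx₀eq : (∑ k, (∑ e ∈ (P k).edges.toFinset, ρ k e)⁻¹)⁻¹ = (∑ k, w k / Q k)⁻¹ := by
    congr 1
    exact Finset.sum_congr rfl (fun k _ => hSinv k)
  haveI : Nonempty (Fin n) := ⟨⟨0, hn⟩⟩
  have hwQpos : 0 < ∑ k, w k * Q k :=
    Finset.sum_pos (fun k _ => mul_pos (hw k) (hQpos k)) univ_nonempty
  have hsed := Finset.sq_sum_div_le_sum_sq_div (univ : Finset (Fin n)) w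
    (g := fun k => w k * Q k) (fun k _ => mul_pos (hw k) (hQpos k))
  rw [hsum] at hsed
  have hterm : ∀ k : Fin n, (w k)^2 / (w k * Q k) = w k / Q k := by
    intro k
    rw [sq, mul_div_mul_left _ _ (hw k).ne']
  rw [Finset.sum_congr rfl (fun k _ => hterm k)] at hsed
  have h1 : (∑ k, w k * Q k)⁻¹ ≤ ∑ k, w k / Q k := by
    calc (∑ k, w k * Q k)⁻¹ = 1^2 / (∑ k, w k * Q k) := by rw [one_pow, one_div]
    _ ≤ _ := hsed
  have hx₀le : (∑ k, (∑ e ∈ (P k).edges.toFinset, ρ k e)⁻¹)⁻¹ ≤ ∑ k, w k * Q k := by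
    rw [hx₀eq]
    calc (∑ k, w k / Q k)⁻¹ ≤ ((∑ k, w k * Q k)⁻¹)⁻¹ :=
      inv_anti₀ (inv_pos.2 hwQpos) h1
    _ = ∑ k, w k * Q k := inv_inv _
  -- swap the double sum
  set E : Finset (Sym2 V) := univ.biUnion (fun k : Fin n => (P k).edges.toFinset) with hEdef
  have hEdge : ∀ e ∈ E, e ∈ G.edgeSet := by
    intro e he
    rw [hEdef, Finset.mem_biUnion] at he
    obtain ⟨k, -, hk⟩ := he
    exact hmemES k e (List.mem_toFinset.1 hk)
  have hEd : ∀ e ∈ E, ¬ e.IsDiag := fun e he => G.not_isDiag_of_mem_edgeSet (hEdge e he)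
  have hswap : ∑ k, w k * Q k
      = ∑ e ∈ E, (r e * F e) * (∑ k, if e ∈ (P k).edges then w k else 0) := by
    calc ∑ k, w k * Q k
        = ∑ k, ∑ e ∈ E, (if e ∈ (P k).edges then (r e * F e) * w k else 0) := by
          refine Finset.sum_congr rfl (fun k _ => ?_)
          have e1 : ∀ e, (if e ∈ (P k).edges then (r e * F e) * w k else 0)
              = (if e ∈ (P k).edges.toFinset then (r e * F e) * w k else 0) := by
            intro e
            simp [List.mem_toFinset]
          rw [Finset.sum_congr rfl (fun e _ => e1 e), Finset.sum_ite_mem]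
          have h2 : E ∩ (P k).edges.toFinset = (P k).edges.toFinset := by
            rw [Finset.inter_eq_right]
            exact Finset.subset_biUnion_of_mem (fun k : Fin n => (P k).edges.toFinset)
              (Finset.mem_univ k)
          rw [h2, hQdef, Finset.mul_sum]
          refine Finset.sum_congr rfl (fun e _ => ?_)
          ring
    _ = ∑ e ∈ E, ∑ k, (if e ∈ (P k).edges then (r e * F e) * w k else 0) := Finset.sum_comm
    _ = _ := by
          refine Finset.sum_congr rfl (fun e _ => ?_)
          rw [Finset.mul_sum]
          refine Finset.sum_congr rfl (fun k _ => ?_)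
          split <;> simp
  have hsum_le : ∑ k, w k * Q k ≤ ∑ e ∈ E, r e * F e ^ 2 := by
    rw [hswap]
    refine Finset.sum_le_sum (fun e he => ?_)
    have hre : 0 < r e := hr e (hEdge e he)
    calc (r e * F e) * (∑ k, if e ∈ (P k).edges then w k else 0)
        ≤ (r e * F e) * F e :=
          mul_le_mul_of_nonneg_left (hWe e) (mul_nonneg hre.le (hFnn e))
    _ = r e * F e ^ 2 := by ring
  -- energy lower bound
  have hlow : ∑ e ∈ E, r e * F e ^ 2 ≤ flowEnergy r θ := by
    have hpoint : ∀ x y, (if s(x, y) ∈ E then r s(x, y) * F s(x, y) ^ 2 else 0)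
        ≤ θ x y ^ 2 * r s(x, y) := by
      intro x y
      by_cases hxyE : s(x, y) ∈ E
      · rw [if_pos hxyE, hF x y, sq_abs]
        exact le_of_eq (by ring)
      · rw [if_neg hxyE]
        by_cases hadj : G.Adj x y
        · exact mul_nonneg (sq_nonneg _) (hr _ (G.mem_edgeSet.2 hadj)).le
        · rw [hsupp x y hadj]
          norm_num
    have h2 := sum_sum_ite_eq_two_mul E hEd (fun e => r e * F e ^ 2)
    have h3 := Finset.sum_le_sum (fun x (_ : x ∈ (univ : Finset V)) =>
      Finset.sum_le_sum (fun y (_ : y ∈ (univ : Finset V)) => hpoint x y))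
    rw [flowEnergy]
    rw [h2] at h3
    linarith
  calc (∑ k, (∑ e ∈ (P k).edges.toFinset, ρ k e)⁻¹)⁻¹ ≤ ∑ k, w k * Q k := hx₀le
  _ ≤ ∑ e ∈ E, r e * F e ^ 2 := hsum_le
  _ ≤ flowEnergy r θ := hlow

end ParallelAux

/-- **Generalized parallel law**: for a finite connected network with positive
edge resistances, the effective resistance between `u` and `v` equals the
infimum of `(∑ₖ (∑_{e ∈ Pₖ} r_{e,Pₖ})⁻¹)⁻¹` over all families of self-avoiding
paths from `u` to `v` and per-path resistances as above. -/
theorem effRes_eq_inf_parallelValues {V : Type*} [Fintype V] [DecidableEq V]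
    (G : SimpleGraph V) (hG : G.Connected)
    (r : Sym2 V → ℝ) (hr : ∀ e ∈ G.edgeSet, 0 < r e)
    (u v : V) (huv : u ≠ v) :
    effRes G r u v = sInf (parallelValues G r u v) := by
  classical
  obtain ⟨p₀⟩ := hG.preconnected u v
  have hUF₀ : IsUnitFlow G u v (ParallelAux.chi p₀) := by
    refine ⟨ParallelAux.chi_antisymm p₀,
      fun x y h => ParallelAux.chi_eq_zero_of_not_adj p₀ h, ?_, ?_⟩
    · intro x hxu hxv
      rw [ParallelAux.sum_chi p₀ x, if_neg hxu, if_neg hxv]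
      ring
    · rw [ParallelAux.sum_chi p₀ u, if_pos rfl, if_neg huv]
      ring
  have hEne : (flowEnergy r '' {θ | IsUnitFlow G u v θ}).Nonempty :=
    ⟨_, ⟨_, hUF₀, rfl⟩⟩
  obtain ⟨x₀, hx₀mem, hx₀le⟩ := ParallelAux.exists_value_le_energy huv r hr hUF₀
  have hPne : (parallelValues G r u v).Nonempty := ⟨x₀, hx₀mem⟩
  have hEbd : ∀ b ∈ flowEnergy r '' {θ | IsUnitFlow G u v θ}, (0:ℝ) ≤ b := by
    rintro b ⟨θ, hθ, rfl⟩
    rw [flowEnergy]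
    have hpt : ∀ x y, 0 ≤ θ x y ^ 2 * r s(x, y) := by
      intro x y
      by_cases hadj : G.Adj x y
      · exact mul_nonneg (sq_nonneg _) (hr _ (G.mem_edgeSet.2 hadj)).le
      · rw [hθ.2.1 x y hadj]
        norm_num
    have := Finset.sum_nonneg (fun x (_ : x ∈ (univ : Finset V)) =>
      Finset.sum_nonneg (fun y (_ : y ∈ (univ : Finset V)) => hpt x y))
    linarith
  have hPbd : ∀ b ∈ parallelValues G r u v, (0:ℝ) ≤ b := by
    rintro b ⟨n, hn, P, ρ, hP, hρ, hcon, rfl⟩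
    exact inv_nonneg.2 (Finset.sum_nonneg (fun k _ =>
      inv_nonneg.2 (Finset.sum_nonneg fun e _ => (hρ k e).le)))
  refine le_antisymm ?_ ?_
  · refine le_csInf hPne ?_
    intro b hb
    obtain ⟨θ, hθ, hle⟩ := ParallelAux.exists_flow_le_value huv r hr hb
    calc effRes G r u v ≤ flowEnergy r θ :=
      csInf_le ⟨0, fun z hz => hEbd z hz⟩ ⟨θ, hθ, rfl⟩
    _ ≤ b := hle
  · refine le_csInf hEne ?_
    rintro b ⟨θ, hθ, rfl⟩
    obtain ⟨x, hxmem, hxle⟩ := ParallelAux.exists_value_le_energy huv r hr hθ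
    calc sInf (parallelValues G r u v) ≤ x :=
      csInf_le ⟨0, fun z hz => hPbd z hz⟩ hxmem
    _ ≤ _ := hxle
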